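/- Let J_1, …, J_m be subintervals of [n] and write C̃_{s_{J_1}}(q) ⋯ C̃_{s_{J_m}}(q) = Σ_{w∈S_n} a_w T_w in the natural basis of H_n(q). Then for every w ∈ S_n, a_w = Σ_π q^{dfct(π)}, where the sum is over all path families π of type w which cover the star network G_{J_1} ∘ ⋯ ∘ G_{J_m}. -/

import Mathlib

/- Common combinatorial setup: star networks, covering path families,
   crossing/noncrossing statistics, and the base ring ℤ[q^{1/2},q^{-1/2}]. -/

open Equiv Finset
open scoped Classical

noncomputable section

/-- The ring `ℤ[q^{1/2}, q^{-1/2}]`, realized as Laurent polynomials in the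
variable `q^{1/2}` (so the exponent-`k` monomial is `q^{k/2}`). -/
abbrev R2 : Type := LaurentPolynomial ℤ

/-- `q^{k/2}`. -/
def Qp (k : ℤ) : R2 := LaurentPolynomial.T k

/-- `q`. -/
def qq : R2 := LaurentPolynomial.T 2

/-- Coxeter length of a permutation, i.e. its inversion number. -/
def len {n : ℕ} (w : Perm (Fin n)) : ℕ :=
  ((univ : Finset (Fin n × Fin n)).filter fun p => p.1 < p.2 ∧ w p.2 < w p.1).card

/-- Membership in the interval `J = [a,b] ⊆ [n]`. -/
def memJ {n : ℕ} (J : Fin n × Fin n) (i : Fin n) : Prop := J.1 ≤ i ∧ i ≤ J.2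

/-- Membership in the subgroup `S_J ≤ S_n` generated by the adjacent
transpositions `s_a, …, s_{b-1}` of the interval `J = [a,b]`; equivalently,
the permutations supported on `[a,b]`. -/
def inSJ {n : ℕ} (J : Fin n × Fin n) (w : Perm (Fin n)) : Prop :=
  ∀ i, w i ≠ i → memJ J i

/-- A path family covering the star network `G_{J_1} ∘ ⋯ ∘ G_{J_m}` is
faithfully encoded by the permutation of the wire positions realized at each
simple-star factor: at factor `p` the paths whose current positions lie in
`J_p` pass through the central vertex and are permuted arbitrarily within
`J_p` (every entering and leaving edge being used exactly once), while all
other paths use their unique horizontal edge.  Thus a covering family is a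
sequence `vs` of permutations with `vs p` supported on `J_p`. -/
def IsPathFamily {n m : ℕ} (Js : Fin m → Fin n × Fin n)
    (vs : Fin m → Perm (Fin n)) : Prop :=
  ∀ p, inSJ (Js p) (vs p)

/-- The position of the path starting at source `i` just before factor `k`
(as a permutation of sources). -/
def posAt {n m : ℕ} (vs : Fin m → Perm (Fin n)) (k : ℕ) : Perm (Fin n) :=
  (((List.ofFn vs).take k).reverse).prod

/-- The type of a covering path family: the path starting at source `i`
terminates at sink `typeOf vs i`. -/
def typeOf {n m : ℕ} (vs : Fin m → Perm (Fin n)) : Perm (Fin n) := posAt vs m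

/-- The path from source `i` passes through the central vertex of the factor
`G_{J_p}`. -/
def centeredAt {n m : ℕ} (Js : Fin m → Fin n × Fin n) (vs : Fin m → Perm (Fin n))
    (p : Fin m) (i : Fin n) : Prop :=
  (Js p).1 < (Js p).2 ∧ memJ (Js p) (posAt vs p i)

/-- The paths from sources `i` and `j` both pass through the central vertex of
the factor `G_{J_p}`. -/
def meetAt {n m : ℕ} (Js : Fin m → Fin n × Fin n) (vs : Fin m → Perm (Fin n))
    (p : Fin m) (i j : Fin n) : Prop :=
  centeredAt Js vs p i ∧ centeredAt Js vs p j

/-- The triple `(π_i, π_j, p)` is a crossing: the two paths intersect at the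
central vertex of `G_{J_p}` and cross there. -/
def crossingAt {n m : ℕ} (Js : Fin m → Fin n × Fin n) (vs : Fin m → Perm (Fin n))
    (p : Fin m) (i j : Fin n) : Prop :=
  meetAt Js vs p i j ∧
    ¬ ((posAt vs p i < posAt vs p j) ↔ (posAt vs (p.1 + 1) i < posAt vs (p.1 + 1) j))

/-- `cross(π)`: the number of crossings of the path family. -/
def crossNum {n m : ℕ} (Js : Fin m → Fin n × Fin n)
    (vs : Fin m → Perm (Fin n)) : ℕ :=
  ((univ : Finset ((Fin n × Fin n) × Fin m)).filter fun x =>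
    x.1.1 < x.1.2 ∧ crossingAt Js vs x.2 x.1.1 x.1.2).card

/-- The triple `(π_i, π_j, p)` is a noncrossing with `π_i` entering and
leaving the central vertex of `G_{J_p}` below `π_j`. -/
def noncrossBelow {n m : ℕ} (Js : Fin m → Fin n × Fin n) (vs : Fin m → Perm (Fin n))
    (p : Fin m) (i j : Fin n) : Prop :=
  meetAt Js vs p i j ∧
    posAt vs p i < posAt vs p j ∧ posAt vs (p.1 + 1) i < posAt vs (p.1 + 1) j

/-- `incross(U)` for a tableau `U` containing the paths of `π`, recorded via
the function `col` assigning to each path (index) the index of the column of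
`U` containing it: the number of inverted noncrossings, i.e. noncrossings
`(π_i, π_j, p)` (with `π_i` below `π_j`) such that `π_j` lies in an earlier
column of `U` than `π_i`. -/
def incrossNum {n m : ℕ} (Js : Fin m → Fin n × Fin n) (vs : Fin m → Perm (Fin n))
    (col : Fin n → ℕ) : ℕ :=
  ((univ : Finset ((Fin n × Fin n) × Fin m)).filter fun x =>
    noncrossBelow Js vs x.2 x.1.1 x.1.2 ∧ col x.1.2 < col x.1.1).card

/-- The number of crossings of the two paths `π_i, π_j` strictly before the
factor `G_{J_p}`. -/
def crossBefore {n m : ℕ} (Js : Fin m → Fin n × Fin n) (vs : Fin m → Perm (Fin n))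
    (p : Fin m) (i j : Fin n) : ℕ :=
  ((univ : Finset (Fin m)).filter fun k => k < p ∧ crossingAt Js vs k i j).card

/-- The triple `(π_i, π_j, p)` is defective: the paths meet at the central
vertex of `G_{J_p}` having previously crossed an odd number of times. -/
def defectiveAt {n m : ℕ} (Js : Fin m → Fin n × Fin n) (vs : Fin m → Perm (Fin n))
    (p : Fin m) (i j : Fin n) : Prop :=
  meetAt Js vs p i j ∧ Odd (crossBefore Js vs p i j)

/-- `dfct(π)`: the number of defective triples of the path family. -/
def dfctNum {n m : ℕ} (Js : Fin m → Fin n × Fin n)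
    (vs : Fin m → Perm (Fin n)) : ℕ :=
  ((univ : Finset ((Fin n × Fin n) × Fin m)).filter fun x =>
    x.1.1 < x.1.2 ∧ defectiveAt Js vs x.2 x.1.1 x.1.2).card

/-- `cdncross(W)`: the number of defective noncrossings between pairs of
paths appearing in the same column of the tableau recorded by `col`. -/
def cdncrossNum {n m : ℕ} (Js : Fin m → Fin n × Fin n) (vs : Fin m → Perm (Fin n))
    (col : Fin n → ℕ) : ℕ :=
  ((univ : Finset ((Fin n × Fin n) × Fin m)).filter fun x =>
    x.1.1 < x.1.2 ∧ defectiveAt Js vs x.2 x.1.1 x.1.2 ∧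
      ¬ crossingAt Js vs x.2 x.1.1 x.1.2 ∧ col x.1.1 = col x.1.2).card

/-- The adjacent transposition `s_{i+1}` (0-indexed: swaps positions `i` and
`i+1`). -/
def swp {n : ℕ} (i : ℕ) (h : i + 1 < n) : Perm (Fin n) :=
  Equiv.swap ⟨i, by omega⟩ ⟨i + 1, h⟩

end

noncomputable section
open Equiv Finset
open scoped Classical

variable {n : ℕ}

/-- lower point of the swap -/
def lo {j : ℕ} (h : j + 1 < n) : Fin n := ⟨j, by omega⟩
/-- upper point of the swap -/
def hi {j : ℕ} (h : j + 1 < n) : Fin n := ⟨j + 1, h⟩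

lemma perm_apply_inv_self (f : Perm (Fin n)) (x : Fin n) : f (f⁻¹ x) = x :=
  f.apply_symm_apply x

lemma perm_inv_apply_self (f : Perm (Fin n)) (x : Fin n) : f⁻¹ (f x) = x :=
  f.symm_apply_apply x

lemma swp_eq {j : ℕ} (h : j + 1 < n) : swp j h = Equiv.swap (lo h) (hi h) := rfl

lemma lo_lt_hi {j : ℕ} (h : j + 1 < n) : lo h < hi h := by
  simp [lo, hi, Fin.lt_def]

lemma swp_mul_self {j : ℕ} (h : j + 1 < n) : swp j h * swp j h = 1 := by
  rw [swp_eq]; exact Equiv.swap_mul_self _ _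

lemma swp_inv {j : ℕ} (h : j + 1 < n) : (swp j h)⁻¹ = swp j h := by
  rw [swp_eq]; exact Equiv.swap_inv _ _

lemma swp_val {j : ℕ} (h : j + 1 < n) (x : Fin n) :
    ((swp j h x : Fin n) : ℕ) = if (x : ℕ) = j then j + 1 else if (x : ℕ) = j + 1 then j else x := by
  rw [swp_eq, Equiv.swap_apply_def]
  split_ifs with h1 h2 <;> simp_all [lo, hi, Fin.ext_iff]

lemma swap_lt_iff {j : ℕ} (h : j + 1 < n) (a b : Fin n) :
    (swp j h a < swp j h b) ↔
      ((a < b) ↔ ¬((a = lo h ∧ b = hi h) ∨ (a = hi h ∧ b = lo h))) := by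
  have ha := swp_val h a
  have hb := swp_val h b
  simp only [Fin.lt_def, ha, hb, Fin.ext_iff, lo, hi]
  split_ifs <;> omega

/-- The inversion set. -/
def InvS (w : Perm (Fin n)) : Finset (Fin n × Fin n) :=
  (univ : Finset (Fin n × Fin n)).filter fun p => p.1 < p.2 ∧ w p.2 < w p.1

lemma len_def (w : Perm (Fin n)) : len w = (InvS w).card := rfl

lemma mem_InvS {w : Perm (Fin n)} {p : Fin n × Fin n} :
    p ∈ InvS w ↔ p.1 < p.2 ∧ w p.2 < w p.1 := by simp [InvS]

lemma mem_InvS_swp_mul {j : ℕ} (h : j + 1 < n) (w : Perm (Fin n)) (p : Fin n × Fin n) :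
    p ∈ InvS (swp j h * w) ↔
      (p.1 < p.2 ∧ ((w p.2 < w p.1) ↔
        ¬((p.2 = w⁻¹ (lo h) ∧ p.1 = w⁻¹ (hi h)) ∨ (p.2 = w⁻¹ (hi h) ∧ p.1 = w⁻¹ (lo h))))) := by
  rw [mem_InvS]
  simp only [Perm.mul_apply, swap_lt_iff h, Equiv.Perm.eq_inv_iff_eq]

lemma InvS_swp_mul_asc {j : ℕ} (h : j + 1 < n) (w : Perm (Fin n))
    (hasc : w⁻¹ (lo h) < w⁻¹ (hi h)) :
    InvS (swp j h * w) = insert (w⁻¹ (lo h), w⁻¹ (hi h)) (InvS w) := by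
  have hlohi : w (w⁻¹ (lo h)) < w (w⁻¹ (hi h)) := by
    simp only [perm_apply_inv_self]; exact lo_lt_hi h
  ext p
  rw [mem_InvS_swp_mul h, Finset.mem_insert, mem_InvS]
  constructor
  · rintro ⟨h1, h2⟩
    by_cases hm : (p.2 = w⁻¹ (lo h) ∧ p.1 = w⁻¹ (hi h)) ∨ (p.2 = w⁻¹ (hi h) ∧ p.1 = w⁻¹ (lo h))
    · rcases hm with ⟨hx, hy⟩ | ⟨hx, hy⟩
      · exfalso; rw [hx, hy] at h1; exact absurd h1 (not_lt.mpr hasc.le)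
      · left; exact Prod.ext_iff.mpr ⟨hy, hx⟩
    · right; exact ⟨h1, h2.mpr hm⟩
  · rintro (hp | ⟨h1, h2⟩)
    · rw [Prod.ext_iff] at hp
      refine ⟨by rw [hp.1, hp.2]; exact hasc, iff_of_false ?_ ?_⟩
      · rw [hp.1, hp.2]; exact not_lt.mpr hlohi.le
      · intro hn; exact hn (Or.inr ⟨hp.2, hp.1⟩)
    · refine ⟨h1, iff_of_true h2 ?_⟩
      rintro (⟨hx, hy⟩ | ⟨hx, hy⟩)
      · rw [hx, hy] at h1; exact absurd h1 (not_lt.mpr hasc.le)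
      · rw [hx, hy] at h2; exact absurd h2 (not_lt.mpr hlohi.le)

lemma InvS_swp_mul_desc {j : ℕ} (h : j + 1 < n) (w : Perm (Fin n))
    (hdesc : w⁻¹ (hi h) < w⁻¹ (lo h)) :
    InvS (swp j h * w) = (InvS w).erase (w⁻¹ (hi h), w⁻¹ (lo h)) := by
  have hlohi : w (w⁻¹ (lo h)) < w (w⁻¹ (hi h)) := by
    simp only [perm_apply_inv_self]; exact lo_lt_hi h
  ext p
  rw [mem_InvS_swp_mul h, Finset.mem_erase, mem_InvS]
  constructor
  · rintro ⟨h1, h2⟩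
    by_cases hm : (p.2 = w⁻¹ (lo h) ∧ p.1 = w⁻¹ (hi h)) ∨ (p.2 = w⁻¹ (hi h) ∧ p.1 = w⁻¹ (lo h))
    · exfalso
      rcases hm with ⟨hx, hy⟩ | ⟨hx, hy⟩
      · have hlt : w p.2 < w p.1 := by rw [hx, hy]; exact hlohi
        exact (h2.mp hlt) (Or.inl ⟨hx, hy⟩)
      · rw [hx, hy] at h1; exact absurd h1 (not_lt.mpr hdesc.le)
    · push_neg at hm
      refine ⟨fun hp => ?_, h1, h2.mpr (by push_neg; exact hm)⟩
      rw [Prod.ext_iff] at hp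
      exact (hm.1 hp.2) hp.1
  · rintro ⟨hne, h1, h2⟩
    refine ⟨h1, iff_of_true h2 ?_⟩
    rintro (⟨hx, hy⟩ | ⟨hx, hy⟩)
    · exact hne (Prod.ext_iff.mpr ⟨hy, hx⟩)
    · rw [hx, hy] at h1; exact absurd h1 (not_lt.mpr hdesc.le)

lemma len_swp_mul_asc {j : ℕ} (h : j + 1 < n) (w : Perm (Fin n))
    (hasc : w⁻¹ (lo h) < w⁻¹ (hi h)) :
    len (swp j h * w) = len w + 1 := by
  have hnm : (w⁻¹ (lo h), w⁻¹ (hi h)) ∉ InvS w := by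
    rw [mem_InvS]
    push_neg
    intro _
    simp only [perm_apply_inv_self]
    exact (lo_lt_hi h).le
  rw [len_def, len_def, InvS_swp_mul_asc h w hasc, Finset.card_insert_of_notMem hnm]

lemma len_swp_mul_desc {j : ℕ} (h : j + 1 < n) (w : Perm (Fin n))
    (hdesc : w⁻¹ (hi h) < w⁻¹ (lo h)) :
    len w = len (swp j h * w) + 1 := by
  have hmem : (w⁻¹ (hi h), w⁻¹ (lo h)) ∈ InvS w := by
    rw [mem_InvS]
    refine ⟨hdesc, ?_⟩
    simp only [perm_apply_inv_self]
    exact lo_lt_hi h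
  rw [len_def, len_def, InvS_swp_mul_desc h w hdesc]
  exact (Finset.card_erase_add_one hmem).symm

lemma inv_ne_inv {w : Perm (Fin n)} {a b : Fin n} (hab : a ≠ b) : w⁻¹ a ≠ w⁻¹ b :=
  fun hh => hab (w⁻¹.injective hh)

lemma len_lt_swp_mul_iff {j : ℕ} (h : j + 1 < n) (w : Perm (Fin n)) :
    len w < len (swp j h * w) ↔ w⁻¹ (lo h) < w⁻¹ (hi h) := by
  rcases lt_or_gt_of_ne (inv_ne_inv (ne_of_lt (lo_lt_hi h))) with hc | hc
  · have := len_swp_mul_asc h w hc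
    exact iff_of_true (by omega) hc
  · have := len_swp_mul_desc h w hc
    exact iff_of_false (by omega) (not_lt.mpr hc.le)

lemma len_inv (w : Perm (Fin n)) : len w⁻¹ = len w := by
  rw [len_def, len_def]
  apply Finset.card_nbij' (i := fun p => (w⁻¹ p.2, w⁻¹ p.1)) (j := fun p => (w p.2, w p.1))
  · intro p hp; rw [Finset.mem_coe, mem_InvS] at *
    simp only [perm_apply_inv_self]
    exact ⟨hp.2, hp.1⟩
  · intro p hp; rw [Finset.mem_coe, mem_InvS] at *
    simp only [perm_inv_apply_self]
    exact ⟨hp.2, hp.1⟩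
  · intro p hp; simp
  · intro p hp; simp

lemma mul_swp_inv {j : ℕ} (h : j + 1 < n) (w : Perm (Fin n)) :
    (w * swp j h)⁻¹ = swp j h * w⁻¹ := by
  rw [mul_inv_rev, swp_inv]

lemma len_mul_swp_asc {j : ℕ} (h : j + 1 < n) (w : Perm (Fin n))
    (hasc : w (lo h) < w (hi h)) :
    len (w * swp j h) = len w + 1 := by
  rw [← len_inv (w * swp j h), mul_swp_inv h w, ← len_inv w]
  apply len_swp_mul_asc h w⁻¹
  simpa using hasc

lemma len_mul_swp_desc {j : ℕ} (h : j + 1 < n) (w : Perm (Fin n))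
    (hdesc : w (hi h) < w (lo h)) :
    len w = len (w * swp j h) + 1 := by
  rw [← len_inv (w * swp j h), mul_swp_inv h w, ← len_inv w]
  apply len_swp_mul_desc h w⁻¹
  simpa using hdesc

lemma len_lt_mul_swp_iff {j : ℕ} (h : j + 1 < n) (w : Perm (Fin n)) :
    len w < len (w * swp j h) ↔ w (lo h) < w (hi h) := by
  rw [← len_inv (w * swp j h), mul_swp_inv h w, ← len_inv w, len_lt_swp_mul_iff h w⁻¹]
  simp

end

noncomputable section
open Equiv Finset
open scoped Classical

variable {n : ℕ}

lemma fin_strictMono_le {f : Fin n → Fin n} (hf : StrictMono f) : ∀ x : Fin n, (x : ℕ) ≤ ((f x : Fin n) : ℕ) := by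
  suffices h : ∀ K, ∀ x : Fin n, x.val = K → x.val ≤ (f x).val by
    exact fun x => h x.val x rfl
  intro K
  induction K using Nat.strong_induction_on with
  | _ K IH =>
    intro x hx
    subst hx
    rcases Nat.eq_zero_or_pos x.val with h0 | h0
    · omega
    · have hk : x.val - 1 < n := by have := x.isLt; omega
      have hlt : (⟨x.val - 1, hk⟩ : Fin n) < x := by
        rw [Fin.lt_def]
        show x.val - 1 < x.val
        omega
      have h1 := hf hlt
      rw [Fin.lt_def] at h1
      have h2 := IH (x.val - 1) (by omega) ⟨x.val - 1, hk⟩ rfl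
      have h2' : x.val - 1 ≤ (f ⟨x.val - 1, hk⟩).val := h2
      omega

lemma len_eq_zero {w : Perm (Fin n)} : len w = 0 ↔ w = 1 := by
  constructor
  · intro h0
    have hemp : InvS w = ∅ := Finset.card_eq_zero.mp h0
    have hmono : StrictMono (fun x => w x) := by
      intro x y hxy
      rcases lt_trichotomy (w x) (w y) with hc | hc | hc
      · exact hc
      · exact absurd (w.injective hc) (ne_of_lt hxy)
      · exfalso
        have : (x, y) ∈ InvS w := mem_InvS.mpr ⟨hxy, hc⟩
        rw [hemp] at this; exact absurd this (Finset.notMem_empty _)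
    have hmono' : StrictMono (fun x => w⁻¹ x) := by
      intro x y hxy
      rcases lt_trichotomy (w⁻¹ x) (w⁻¹ y) with hc | hc | hc
      · exact hc
      · exact absurd (w⁻¹.injective hc) (ne_of_lt hxy)
      · exfalso
        have := hmono hc
        simp only [perm_apply_inv_self] at this
        exact absurd (this.trans hxy) (lt_irrefl _)
    apply Equiv.ext
    intro x
    have h1 := fin_strictMono_le hmono x
    have h2 := fin_strictMono_le hmono' (w x)
    simp only [perm_inv_apply_self] at h2
    simp only [Perm.one_apply]
    exact Fin.ext (le_antisymm h2 h1)
  · intro h; subst h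
    rw [len_def]
    rw [Finset.card_eq_zero]
    refine Finset.ext fun p => ?_
    rw [mem_InvS]
    simp only [Perm.one_apply, Finset.notMem_empty, iff_false, not_and]
    intro h1
    exact not_lt.mpr h1.le

/-- J-inversions. -/
def InvJ (J : Fin n × Fin n) (u : Perm (Fin n)) : Finset (Fin n × Fin n) :=
  (univ : Finset (Fin n × Fin n)).filter fun p =>
    p.1 < p.2 ∧ u p.2 < u p.1 ∧ memJ J (u p.1) ∧ memJ J (u p.2)

def invJ (J : Fin n × Fin n) (u : Perm (Fin n)) : ℕ := (InvJ J u).card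

lemma mem_InvJ {J : Fin n × Fin n} {u : Perm (Fin n)} {p : Fin n × Fin n} :
    p ∈ InvJ J u ↔ p.1 < p.2 ∧ u p.2 < u p.1 ∧ memJ J (u p.1) ∧ memJ J (u p.2) := by
  simp [InvJ]

lemma exists_J_descent {J : Fin n × Fin n} {u : Perm (Fin n)} (hne : invJ J u ≠ 0) :
    ∃ j, ∃ (h : j + 1 < n), memJ J (lo h) ∧ memJ J (hi h) ∧ u⁻¹ (hi h) < u⁻¹ (lo h) := by
  by_contra hno
  push_neg at hno
  have hle : ∀ j (h : j + 1 < n), memJ J (lo h) → memJ J (hi h) → u⁻¹ (lo h) ≤ u⁻¹ (hi h) := by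
    intro j h h1 h2
    exact hno j h h1 h2
  have claim : ∀ d (α β : Fin n), memJ J α → memJ J β → (β : ℕ) = (α : ℕ) + d →
      u⁻¹ α ≤ u⁻¹ β := by
    intro d
    induction d with
    | zero =>
      intro α β _ _ hd
      have : α = β := Fin.ext (by omega)
      subst this; exact le_refl _
    | succ k IH =>
      intro α β hα hβ hd
      have hγlt : (α : ℕ) + k < n := by have := β.isLt; omega
      set γ : Fin n := ⟨(α : ℕ) + k, hγlt⟩ with hγ
      have hγJ : memJ J γ := by
        obtain ⟨ha1, ha2⟩ := hα
        obtain ⟨hb1, hb2⟩ := hβ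
        constructor
        · refine le_trans ha1 ?_; rw [Fin.le_def]; simp [hγ]
        · refine le_trans ?_ hb2; rw [Fin.le_def]; simp [hγ]; omega
      have h1 : u⁻¹ α ≤ u⁻¹ γ := IH α γ hα hγJ rfl
      have hjh : ((α : ℕ) + k) + 1 < n := by have := β.isLt; omega
      have hloγ : lo hjh = γ := rfl
      have hhiβ : hi hjh = β := Fin.ext (by simp [hi]; omega)
      have h2 := hle _ hjh (by rw [hloγ]; exact hγJ) (by rw [hhiβ]; exact hβ)
      rw [hloγ, hhiβ] at h2
      exact le_trans h1 h2
  have hInvJ : InvJ J u = ∅ := by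
    ext p
    simp only [Finset.notMem_empty, iff_false]
    intro hp
    rw [mem_InvJ] at hp
    obtain ⟨h1, h2, h3, h4⟩ := hp
    have := claim ((u p.1 : ℕ) - (u p.2 : ℕ)) (u p.2) (u p.1) h4 h3 (by omega)
    simp only [perm_inv_apply_self] at this
    exact absurd h1 (not_lt.mpr this)
  exact hne (by rw [invJ, hInvJ, Finset.card_empty])

lemma exists_descent {w : Perm (Fin n)} (hne : w ≠ 1) :
    ∃ j, ∃ (h : j + 1 < n), w⁻¹ (hi h) < w⁻¹ (lo h) := by
  have hn : 0 < n := by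
    rcases Nat.eq_zero_or_pos n with h0 | h0
    · exfalso; subst h0; exact hne (Subsingleton.elim _ _)
    · exact h0
  set J : Fin n × Fin n := (⟨0, hn⟩, ⟨n - 1, by omega⟩) with hJ
  have hmem : ∀ i : Fin n, memJ J i := by
    intro i
    constructor <;> rw [Fin.le_def] <;> simp [hJ] <;> omega
  have hJeq : InvJ J w = InvS w := by
    ext p; rw [mem_InvJ, mem_InvS]
    exact ⟨fun h => ⟨h.1, h.2.1⟩, fun h => ⟨h.1, h.2, hmem _, hmem _⟩⟩
  have hlen : invJ J w ≠ 0 := by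
    rw [invJ, hJeq, ← len_def]
    exact fun h0 => hne (len_eq_zero.mp h0)
  obtain ⟨j, h, _, _, hd⟩ := exists_J_descent hlen
  exact ⟨j, h, hd⟩

/- S_J API -/

lemma inSJ_one (J : Fin n × Fin n) : inSJ J (1 : Perm (Fin n)) := by
  intro i hi; exact absurd rfl hi

lemma fixed_of_not_memJ {J : Fin n × Fin n} {v : Perm (Fin n)} (hv : inSJ J v) {x : Fin n}
    (hx : ¬ memJ J x) : v x = x := by
  by_contra hne
  exact hx (hv x hne)

lemma memJ_image {J : Fin n × Fin n} {v : Perm (Fin n)} (hv : inSJ J v) {x : Fin n}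
    (hx : memJ J x) : memJ J (v x) := by
  by_contra hvx
  have h1 : v (v x) = v x := fixed_of_not_memJ hv hvx
  have h2 : v x = x := v.injective h1
  rw [h2] at hvx
  exact hvx hx

lemma inSJ_inv {J : Fin n × Fin n} {v : Perm (Fin n)} (hv : inSJ J v) : inSJ J v⁻¹ := by
  intro i hi
  have hx : v (v⁻¹ i) = i := perm_apply_inv_self v i
  have : v (v⁻¹ i) ≠ v⁻¹ i := by rw [hx]; exact fun h => hi h.symm
  have hmem : memJ J (v⁻¹ i) := hv _ this
  have := memJ_image hv hmem
  rwa [hx] at this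

lemma inSJ_mul {J : Fin n × Fin n} {v v' : Perm (Fin n)} (hv : inSJ J v) (hv' : inSJ J v') :
    inSJ J (v * v') := by
  intro i hi
  by_cases h1 : v' i = i
  · apply hv; rw [Perm.mul_apply, h1] at hi; exact hi
  · exact hv' i h1

lemma inSJ_swp {J : Fin n × Fin n} {j : ℕ} (h : j + 1 < n)
    (h1 : memJ J (lo h)) (h2 : memJ J (hi h)) : inSJ J (swp j h) := by
  intro i hik
  rcases eq_or_ne i (lo h) with rfl | hne1
  · exact h1
  rcases eq_or_ne i (hi h) with rfl | hne2
  · exact h2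
  · exfalso; rw [swp_eq, Equiv.swap_apply_of_ne_of_ne hne1 hne2] at hik
    exact hik rfl

lemma inSJ_singleton {J : Fin n × Fin n} (hJ : J.1 = J.2) {v : Perm (Fin n)}
    (hv : inSJ J v) : v = 1 := by
  apply Equiv.ext
  intro x
  simp only [Perm.one_apply]
  by_contra hne
  have hx := hv x hne
  have hxJ : x = J.1 := by
    have e2 : x ≤ J.1 := by rw [hJ]; exact hx.2
    exact le_antisymm e2 hx.1
  have hfix : ∀ y : Fin n, y ≠ x → v y = y := by
    intro y hy
    by_contra hvy
    have h1 := hv y hvy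
    have hyJ : y = J.1 := by
      have e2 : y ≤ J.1 := by rw [hJ]; exact h1.2
      exact le_antisymm e2 h1.1
    exact hy (hyJ.trans hxJ.symm)
  have : v (v x) = v x := by
    rcases eq_or_ne (v x) x with he | he
    · exact absurd he hne
    · exact hfix (v x) he
  exact hne (v.injective this)

lemma invJ_zero_mono {J : Fin n × Fin n} {u : Perm (Fin n)} (h0 : invJ J u = 0)
    {α β : Fin n} (hα : memJ J α) (hβ : memJ J β) (hab : α < β) : u⁻¹ α < u⁻¹ β := by
  rcases lt_trichotomy (u⁻¹ α) (u⁻¹ β) with hc | hc | hc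
  · exact hc
  · exact absurd (u⁻¹.injective hc) (ne_of_lt hab)
  · exfalso
    have hp : (u⁻¹ β, u⁻¹ α) ∈ InvJ J u := by
      rw [mem_InvJ]
      simp only [perm_apply_inv_self]
      exact ⟨hc, hab, hβ, hα⟩
    have := Finset.card_ne_zero_of_mem hp
    rw [invJ] at h0
    exact this h0

lemma memJ_swp {J : Fin n × Fin n} {j : ℕ} (h : j + 1 < n)
    (h1 : memJ J (lo h)) (h2 : memJ J (hi h)) (x : Fin n) :
    memJ J (swp j h x) ↔ memJ J x := by
  rcases eq_or_ne x (lo h) with rfl | hne1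
  · rw [swp_eq, Equiv.swap_apply_left]; exact iff_of_true h2 h1
  rcases eq_or_ne x (hi h) with rfl | hne2
  · rw [swp_eq, Equiv.swap_apply_right]; exact iff_of_true h1 h2
  · rw [swp_eq, Equiv.swap_apply_of_ne_of_ne hne1 hne2]

lemma InvJ_swp_mul_desc {J : Fin n × Fin n} {j : ℕ} (h : j + 1 < n)
    (hJ1 : memJ J (lo h)) (hJ2 : memJ J (hi h)) (u : Perm (Fin n))
    (hdesc : u⁻¹ (hi h) < u⁻¹ (lo h)) :
    InvJ J (swp j h * u) = (InvJ J u).erase (u⁻¹ (hi h), u⁻¹ (lo h)) := by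
  ext p
  rw [mem_InvJ, Finset.mem_erase, mem_InvJ]
  simp only [Perm.mul_apply, swap_lt_iff h, memJ_swp h hJ1 hJ2]
  constructor
  · rintro ⟨h1, h2, h3, h4⟩
    by_cases hm : (u p.2 = lo h ∧ u p.1 = hi h) ∨ (u p.2 = hi h ∧ u p.1 = lo h)
    · exfalso
      rcases hm with ⟨hx, hy⟩ | ⟨hx, hy⟩
      · exact (h2.mp (by rw [hx, hy]; exact lo_lt_hi h)) (Or.inl ⟨hx, hy⟩)
      · have e1 : p.1 = u⁻¹ (lo h) := by rw [← hy, perm_inv_apply_self]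
        have e2 : p.2 = u⁻¹ (hi h) := by rw [← hx, perm_inv_apply_self]
        rw [e1, e2] at h1
        exact absurd h1 (not_lt.mpr hdesc.le)
    · push_neg at hm
      refine ⟨fun hp => ?_, h1, h2.mpr (by push_neg; exact hm), h3, h4⟩
      rw [Prod.ext_iff] at hp
      have e2 : u p.2 = lo h := by
        have : p.2 = u⁻¹ (lo h) := hp.2
        rw [this, perm_apply_inv_self]
      have e1 : u p.1 = hi h := by
        have : p.1 = u⁻¹ (hi h) := hp.1
        rw [this, perm_apply_inv_self]
      exact (hm.1 e2) e1
  · rintro ⟨hne, h1, h2, h3, h4⟩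
    refine ⟨h1, iff_of_true h2 ?_, h3, h4⟩
    rintro (⟨hx, hy⟩ | ⟨hx, hy⟩)
    · apply hne
      rw [Prod.ext_iff]
      constructor
      · show p.1 = u⁻¹ (hi h)
        rw [← hy, perm_inv_apply_self]
      · show p.2 = u⁻¹ (lo h)
        rw [← hx, perm_inv_apply_self]
    · have e1 : p.1 = u⁻¹ (lo h) := by rw [← hy, perm_inv_apply_self]
      have e2 : p.2 = u⁻¹ (hi h) := by rw [← hx, perm_inv_apply_self]
      rw [e1, e2] at h1
      exact absurd h1 (not_lt.mpr hdesc.le)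

lemma invJ_swp_mul_desc {J : Fin n × Fin n} {j : ℕ} (h : j + 1 < n)
    (hJ1 : memJ J (lo h)) (hJ2 : memJ J (hi h)) (u : Perm (Fin n))
    (hdesc : u⁻¹ (hi h) < u⁻¹ (lo h)) :
    invJ J u = invJ J (swp j h * u) + 1 := by
  have hmem : (u⁻¹ (hi h), u⁻¹ (lo h)) ∈ InvJ J u := by
    rw [mem_InvJ]
    simp only [perm_apply_inv_self]
    exact ⟨hdesc, lo_lt_hi h, hJ2, hJ1⟩
  rw [invJ, invJ, InvJ_swp_mul_desc h hJ1 hJ2 u hdesc]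
  exact (Finset.card_erase_add_one hmem).symm

end

noncomputable section
open Equiv Finset
open scoped Classical

variable {n m : ℕ}

lemma posAt_zero (vs : Fin m → Perm (Fin n)) : posAt vs 0 = 1 := by
  simp [posAt]

lemma posAt_succ (vs : Fin m → Perm (Fin n)) {k : ℕ} (hk : k < m) :
    posAt vs (k + 1) = vs ⟨k, hk⟩ * posAt vs k := by
  have hlen : k < (List.ofFn vs).length := by simp [hk]
  have htake : (List.ofFn vs).take (k + 1) = (List.ofFn vs).take k ++ [vs ⟨k, hk⟩] := by
    rw [List.take_succ, List.getElem?_eq_getElem hlen]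
    simp
  rw [posAt, posAt, htake, List.reverse_append]
  simp

lemma ofFn_snoc (vs : Fin m → Perm (Fin n)) (v : Perm (Fin n)) :
    List.ofFn (Fin.snoc vs v : Fin (m + 1) → Perm (Fin n)) = List.ofFn vs ++ [v] := by
  rw [List.ofFn_succ']
  simp [List.concat_eq_append]

lemma posAt_snoc (vs : Fin m → Perm (Fin n)) (v : Perm (Fin n)) {k : ℕ} (hk : k ≤ m) :
    posAt (Fin.snoc vs v : Fin (m + 1) → Perm (Fin n)) k = posAt vs k := by
  rw [posAt, posAt, ofFn_snoc, List.take_append_of_le_length (by simp [hk])]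

lemma typeOf_snoc (vs : Fin m → Perm (Fin n)) (v : Perm (Fin n)) :
    typeOf (Fin.snoc vs v : Fin (m + 1) → Perm (Fin n)) = v * typeOf vs := by
  rw [typeOf, typeOf, posAt, posAt, ofFn_snoc,
    List.take_of_length_le (by simp), List.take_of_length_le (by simp),
    List.reverse_append]
  simp

lemma isPathFamily_snoc {Js : Fin (m + 1) → Fin n × Fin n} {vs : Fin m → Perm (Fin n)}
    {v : Perm (Fin n)} :
    IsPathFamily Js (Fin.snoc vs v) ↔
      (IsPathFamily (fun p => Js p.castSucc) vs ∧ inSJ (Js (Fin.last m)) v) := by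
  constructor
  · intro h
    refine ⟨fun p => ?_, ?_⟩
    · have := h p.castSucc; rwa [Fin.snoc_castSucc] at this
    · have := h (Fin.last m); rwa [Fin.snoc_last] at this
  · rintro ⟨h1, h2⟩ p
    refine Fin.lastCases ?_ ?_ p
    · rw [Fin.snoc_last]; exact h2
    · intro q; rw [Fin.snoc_castSucc]; exact h1 q

lemma crossingAt_snoc {Js : Fin (m + 1) → Fin n × Fin n} {vs : Fin m → Perm (Fin n)}
    {v : Perm (Fin n)} (p : Fin m) (i j : Fin n) :
    crossingAt Js (Fin.snoc vs v : Fin (m + 1) → Perm (Fin n)) p.castSucc i j ↔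
      crossingAt (fun q => Js q.castSucc) vs p i j := by
  have e1 : posAt (Fin.snoc vs v : Fin (m + 1) → Perm (Fin n)) (p : ℕ) = posAt vs (p : ℕ) :=
    posAt_snoc vs v (le_of_lt p.isLt)
  have e2 : posAt (Fin.snoc vs v : Fin (m + 1) → Perm (Fin n)) ((p : ℕ) + 1)
      = posAt vs ((p : ℕ) + 1) := posAt_snoc vs v p.isLt
  simp only [crossingAt, meetAt, centeredAt, Fin.coe_castSucc, e1, e2]

/-- count of crossings before stage `K` (natural-number cutoff). -/
def cbN (Js : Fin m → Fin n × Fin n) (vs : Fin m → Perm (Fin n)) (K : ℕ) (i j : Fin n) : ℕ :=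
  ((univ : Finset (Fin m)).filter fun k : Fin m => (k : ℕ) < K ∧ crossingAt Js vs k i j).card

lemma crossBefore_eq_cbN {Js : Fin m → Fin n × Fin n} {vs : Fin m → Perm (Fin n)}
    (p : Fin m) (i j : Fin n) : crossBefore Js vs p i j = cbN Js vs (p : ℕ) i j := rfl

lemma cbN_snoc {Js : Fin (m + 1) → Fin n × Fin n} {vs : Fin m → Perm (Fin n)}
    {v : Perm (Fin n)} {K : ℕ} (hK : K ≤ m) (i j : Fin n) :
    cbN Js (Fin.snoc vs v : Fin (m + 1) → Perm (Fin n)) K i j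
      = cbN (fun q => Js q.castSucc) vs K i j := by
  rw [cbN, cbN]
  have himg : ((univ : Finset (Fin (m + 1))).filter fun k : Fin (m + 1) =>
        (k : ℕ) < K ∧ crossingAt Js (Fin.snoc vs v : Fin (m + 1) → Perm (Fin n)) k i j)
      = ((univ : Finset (Fin m)).filter fun k : Fin m =>
        (k : ℕ) < K ∧ crossingAt (fun q => Js q.castSucc) vs k i j).image Fin.castSucc := by
    ext k
    simp only [Finset.mem_image, Finset.mem_filter, Finset.mem_univ, true_and]
    constructor
    · rintro ⟨h1, h2⟩
      have hk : (k : ℕ) < m := by omega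
      have hcs : Fin.castSucc (⟨(k : ℕ), hk⟩ : Fin m) = k := by apply Fin.ext; simp
      refine ⟨⟨(k : ℕ), hk⟩, ⟨h1, ?_⟩, hcs⟩
      rw [← crossingAt_snoc (v := v) (⟨(k : ℕ), hk⟩ : Fin m) i j, hcs]
      exact h2
    · rintro ⟨k', ⟨h1, h2⟩, rfl⟩
      refine ⟨by simpa using h1, ?_⟩
      rw [crossingAt_snoc (v := v) k' i j]
      exact h2
  rw [himg, Finset.card_image_of_injective _ (Fin.castSucc_injective m)]

lemma order_step {Js : Fin m → Fin n × Fin n} {vs : Fin m → Perm (Fin n)}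
    (hJs : ∀ p, (Js p).1 ≤ (Js p).2) (hvs : IsPathFamily Js vs)
    {i j : Fin n} (hij : i ≠ j) {K : ℕ} (hK : K < m) :
    ((posAt vs (K + 1) i < posAt vs (K + 1) j) ↔ (posAt vs K i < posAt vs K j)) ↔
      ¬ crossingAt Js vs ⟨K, hK⟩ i j := by
  have hsucc := posAt_succ vs hK
  have hvx : posAt vs (K + 1) i = vs ⟨K, hK⟩ (posAt vs K i) := by rw [hsucc]; rfl
  have hvy : posAt vs (K + 1) j = vs ⟨K, hK⟩ (posAt vs K j) := by rw [hsucc]; rfl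
  by_cases hmeet : meetAt Js vs ⟨K, hK⟩ i j
  · have hcr : crossingAt Js vs ⟨K, hK⟩ i j ↔
        ¬ ((posAt vs K i < posAt vs K j) ↔ (posAt vs (K + 1) i < posAt vs (K + 1) j)) := by
      rw [crossingAt]
      exact and_iff_right hmeet
    rw [hcr, not_not]
    exact iff_comm
  · have hncross : ¬ crossingAt Js vs ⟨K, hK⟩ i j := fun hc => hmeet hc.1
    refine iff_of_true ?_ hncross
    rw [hvx, hvy]
    by_cases hab : (Js ⟨K, hK⟩).1 < (Js ⟨K, hK⟩).2
    · have hvsK := hvs ⟨K, hK⟩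
      by_cases hmx : memJ (Js ⟨K, hK⟩) (posAt vs K i)
      · have hmy : ¬ memJ (Js ⟨K, hK⟩) (posAt vs K j) := by
          intro hmy
          exact hmeet ⟨⟨hab, hmx⟩, ⟨hab, hmy⟩⟩
        have hfy : vs ⟨K, hK⟩ (posAt vs K j) = posAt vs K j := fixed_of_not_memJ hvsK hmy
        have hmvx : memJ (Js ⟨K, hK⟩) (vs ⟨K, hK⟩ (posAt vs K i)) := memJ_image hvsK hmx
        rw [hfy]
        rcases not_and_or.mp hmy with hy1 | hy2
        · have hya : posAt vs K j < (Js ⟨K, hK⟩).1 := not_le.mp hy1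
          have h1 : posAt vs K j < posAt vs K i := lt_of_lt_of_le hya hmx.1
          have h2 : posAt vs K j < vs ⟨K, hK⟩ (posAt vs K i) := lt_of_lt_of_le hya hmvx.1
          exact iff_of_false (not_lt.mpr h2.le) (not_lt.mpr h1.le)
        · have hby : (Js ⟨K, hK⟩).2 < posAt vs K j := not_le.mp hy2
          have h1 : posAt vs K i < posAt vs K j := lt_of_le_of_lt hmx.2 hby
          have h2 : vs ⟨K, hK⟩ (posAt vs K i) < posAt vs K j := lt_of_le_of_lt hmvx.2 hby
          exact iff_of_true h2 h1
      · have hfx : vs ⟨K, hK⟩ (posAt vs K i) = posAt vs K i := fixed_of_not_memJ hvsK hmx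
        rw [hfx]
        by_cases hmy : memJ (Js ⟨K, hK⟩) (posAt vs K j)
        · have hmvy : memJ (Js ⟨K, hK⟩) (vs ⟨K, hK⟩ (posAt vs K j)) := memJ_image hvsK hmy
          rcases not_and_or.mp hmx with hx1 | hx2
          · have hxa : posAt vs K i < (Js ⟨K, hK⟩).1 := not_le.mp hx1
            have h1 : posAt vs K i < posAt vs K j := lt_of_lt_of_le hxa hmy.1
            have h2 : posAt vs K i < vs ⟨K, hK⟩ (posAt vs K j) := lt_of_lt_of_le hxa hmvy.1
            exact iff_of_true h2 h1
          · have hbx : (Js ⟨K, hK⟩).2 < posAt vs K i := not_le.mp hx2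
            have h1 : posAt vs K j < posAt vs K i := lt_of_le_of_lt hmy.2 hbx
            have h2 : vs ⟨K, hK⟩ (posAt vs K j) < posAt vs K i := lt_of_le_of_lt hmvy.2 hbx
            exact iff_of_false (not_lt.mpr h2.le) (not_lt.mpr h1.le)
        · rw [fixed_of_not_memJ hvsK hmy]
    · have hone : vs ⟨K, hK⟩ = 1 :=
        inSJ_singleton (le_antisymm (hJs ⟨K, hK⟩) (not_lt.mp hab)) (hvs ⟨K, hK⟩)
      rw [hone]
      simp

lemma parity {Js : Fin m → Fin n × Fin n} {vs : Fin m → Perm (Fin n)}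
    (hJs : ∀ p, (Js p).1 ≤ (Js p).2) (hvs : IsPathFamily Js vs)
    {i j : Fin n} (hij : i ≠ j) :
    ∀ K, K ≤ m → (Odd (cbN Js vs K i j) ↔
      ¬ ((i < j) ↔ (posAt vs K i < posAt vs K j))) := by
  intro K
  induction K with
  | zero =>
    intro _
    have h0 : cbN Js vs 0 i j = 0 := by
      rw [cbN, Finset.card_eq_zero]
      apply Finset.filter_false_of_mem
      intro k _
      simp
    rw [h0, posAt_zero]
    simp [Nat.odd_iff]
  | succ K IH =>
    intro hK1
    have hK : K < m := hK1
    have IH' := IH (le_of_lt hK)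
    have hsplit : cbN Js vs (K + 1) i j =
        cbN Js vs K i j + (if crossingAt Js vs ⟨K, hK⟩ i j then 1 else 0) := by
      rw [cbN, cbN]
      have hU : ((univ : Finset (Fin m)).filter fun k : Fin m =>
            (k : ℕ) < K + 1 ∧ crossingAt Js vs k i j)
          = ((univ : Finset (Fin m)).filter fun k : Fin m =>
              (k : ℕ) < K ∧ crossingAt Js vs k i j)
            ∪ ((univ : Finset (Fin m)).filter fun k : Fin m =>
              k = ⟨K, hK⟩ ∧ crossingAt Js vs k i j) := by
        ext k
        simp only [Finset.mem_filter, Finset.mem_union, Finset.mem_univ, true_and]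
        constructor
        · rintro ⟨h1, h2⟩
          rcases Nat.lt_succ_iff_lt_or_eq.mp h1 with h3 | h3
          · exact Or.inl ⟨h3, h2⟩
          · exact Or.inr ⟨Fin.ext h3, h2⟩
        · rintro (⟨h1, h2⟩ | ⟨h1, h2⟩)
          · exact ⟨by omega, h2⟩
          · refine ⟨?_, h2⟩
            rw [h1]
            show K < K + 1
            omega
      have hdisj : Disjoint
          ((univ : Finset (Fin m)).filter fun k : Fin m =>
            (k : ℕ) < K ∧ crossingAt Js vs k i j)
          ((univ : Finset (Fin m)).filter fun k : Fin m =>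
            k = ⟨K, hK⟩ ∧ crossingAt Js vs k i j) := by
        rw [Finset.disjoint_left]
        intro k hk1 hk2
        rw [Finset.mem_filter] at hk1 hk2
        rw [hk2.2.1] at hk1
        have hKK : K < K := hk1.2.1
        omega
      rw [hU, Finset.card_union_of_disjoint hdisj]
      congr 1
      by_cases hC : crossingAt Js vs ⟨K, hK⟩ i j
      · rw [if_pos hC]
        have hsing : ((univ : Finset (Fin m)).filter fun k : Fin m =>
            k = ⟨K, hK⟩ ∧ crossingAt Js vs k i j) = {⟨K, hK⟩} := by
          ext k
          simp only [Finset.mem_filter, Finset.mem_univ, true_and, Finset.mem_singleton]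
          exact ⟨fun hh => hh.1, fun hh => ⟨hh, hh ▸ hC⟩⟩
        rw [hsing, Finset.card_singleton]
      · rw [if_neg hC, Finset.card_eq_zero]
        apply Finset.filter_false_of_mem
        rintro k _ ⟨rfl, h2⟩
        exact hC h2
    have hstep := order_step hJs hvs hij hK
    rw [hsplit]
    by_cases hC : crossingAt Js vs ⟨K, hK⟩ i j
    · rw [if_pos hC]
      rw [Nat.odd_add_one, IH', not_not]
      have hflip : ¬ ((posAt vs (K + 1) i < posAt vs (K + 1) j) ↔
          (posAt vs K i < posAt vs K j)) := by
        intro hiff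
        exact (hstep.mp hiff) hC
      constructor
      · intro h1 h2
        exact hflip (h2.symm.trans h1)
      · intro h2
        constructor
        · intro hP
          have hB : ¬ (posAt vs (K + 1) i < posAt vs (K + 1) j) :=
            fun hB => h2 (iff_of_true hP hB)
          by_contra hA
          exact hflip (iff_of_false hB hA)
        · intro hA
          by_contra hP
          have hB : ¬ (posAt vs (K + 1) i < posAt vs (K + 1) j) :=
            fun hB => hflip (iff_of_true hB hA)
          exact h2 (iff_of_false hP hB)
    · rw [if_neg hC, add_zero, IH']
      have hsame : (posAt vs (K + 1) i < posAt vs (K + 1) j) ↔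
          (posAt vs K i < posAt vs K j) := hstep.mpr hC
      rw [hsame]

end

/- The Hecke algebra `H_n(q)`, presented abstractly: a ring `H` which is an
algebra over `R2 = ℤ[q^{1/2},q^{-1/2}]` together with a family
`T : S_n → H` (the natural basis) satisfying `T_e = 1` and the defining
right-multiplication rule by the generators `T_{s_i}`.  Group products of
permutations are written so that the product `v w` of the paper corresponds
to the composition `w * v` of `Equiv.Perm`. -/

noncomputable section
open Equiv Finset
open scoped Classical

/-- The defining relations of the Hecke algebra in terms of the natural
basis: `T_e = 1` and
`T_w T_{s_i} = T_{w s_i}` if `ℓ(w s_i) > ℓ(w)`, and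
`T_w T_{s_i} = q T_{w s_i} + (q-1) T_w` otherwise. -/
def HeckeOK {n : ℕ} {H : Type*} [Ring H] [Algebra R2 H]
    (T : Perm (Fin n) → H) : Prop :=
  T 1 = 1 ∧
    ∀ (w : Perm (Fin n)) (i : ℕ) (h : i + 1 < n),
      T w * T (swp i h) =
        if len w < len (swp i h * w) then T (swp i h * w)
        else qq • T (swp i h * w) + (qq - 1) • T w

/-- The (modified) Kazhdan–Lusztig basis element
`C̃_{s_J}(q) = Σ_{v ∈ S_J} T_v`. -/
def CJ {n : ℕ} {H : Type*} [Ring H] [Algebra R2 H]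
    (T : Perm (Fin n) → H) (J : Fin n × Fin n) : H :=
  ∑ v ∈ (univ : Finset (Perm (Fin n))).filter (fun v => inSJ J v), T v

/-- The product `C̃_{s_{J_1}}(q) ⋯ C̃_{s_{J_m}}(q)`. -/
def Cprod {n m : ℕ} {H : Type*} [Ring H] [Algebra R2 H]
    (T : Perm (Fin n) → H) (Js : Fin m → Fin n × Fin n) : H :=
  (List.ofFn (fun p => CJ T (Js p))).prod

end

noncomputable section
open Equiv Finset
open scoped Classical

variable {n : ℕ} {H : Type*} [Ring H] [Algebra R2 H]

lemma swp_ne_one {j : ℕ} (h : j + 1 < n) : swp j h ≠ 1 := by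
  intro heq
  have : swp j h (lo h) = lo h := by rw [heq]; rfl
  rw [swp_eq, Equiv.swap_apply_left] at this
  exact absurd (this ▸ lo_lt_hi h) (lt_irrefl _)

lemma len_swp_pos {j : ℕ} (h : j + 1 < n) : 0 < len (swp j h) :=
  Nat.pos_of_ne_zero (fun h0 => swp_ne_one h (len_eq_zero.mp h0))

lemma len_swp_mul_cases {j : ℕ} (h : j + 1 < n) (w : Perm (Fin n)) :
    len (swp j h * w) = len w + 1 ∨ len w = len (swp j h * w) + 1 := by
  rcases lt_or_gt_of_ne (inv_ne_inv (w := w) (ne_of_lt (lo_lt_hi h))) with hc | hc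
  · exact Or.inl (len_swp_mul_asc h w hc)
  · exact Or.inr (len_swp_mul_desc h w hc)

lemma len_mul_swp_cases {j : ℕ} (h : j + 1 < n) (w : Perm (Fin n)) :
    len (w * swp j h) = len w + 1 ∨ len w = len (w * swp j h) + 1 := by
  rcases lt_trichotomy (w (lo h)) (w (hi h)) with hc | hc | hc
  · exact Or.inl (len_mul_swp_asc h w hc)
  · exact absurd (w.injective hc) (ne_of_lt (lo_lt_hi h))
  · exact Or.inr (len_mul_swp_desc h w hc)

lemma forcing {j j' : ℕ} (h : j + 1 < n) (h' : j' + 1 < n) (u : Perm (Fin n))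
    (h1 : u⁻¹ (lo h') < u⁻¹ (hi h'))
    (h2 : ¬ ((u * swp j h)⁻¹ (lo h') < (u * swp j h)⁻¹ (hi h'))) :
    u * swp j h = swp j' h' * u := by
  rw [mul_swp_inv h u] at h2
  simp only [Perm.mul_apply] at h2
  have hne : swp j h (u⁻¹ (lo h')) ≠ swp j h (u⁻¹ (hi h')) :=
    fun hh => absurd ((swp j h).injective hh) (ne_of_lt h1)
  have h2' : swp j h (u⁻¹ (hi h')) < swp j h (u⁻¹ (lo h')) :=
    lt_of_le_of_ne (not_lt.mp h2) hne.symm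
  have hmatch : (u⁻¹ (lo h') = lo h ∧ u⁻¹ (hi h') = hi h) ∨
      (u⁻¹ (lo h') = hi h ∧ u⁻¹ (hi h') = lo h) := by
    by_contra hm
    have := (swap_lt_iff h (u⁻¹ (lo h')) (u⁻¹ (hi h'))).mpr (iff_of_true h1 hm)
    exact absurd this (not_lt.mpr h2'.le)
  have hAB : u⁻¹ (lo h') = lo h ∧ u⁻¹ (hi h') = hi h := by
    rcases hmatch with hok | ⟨ha, hb⟩
    · exact hok
    · exfalso
      rw [ha, hb] at h1
      exact absurd h1 (not_lt.mpr (lo_lt_hi h).le)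
  have eA : u (lo h) = lo h' := by rw [← hAB.1, perm_apply_inv_self]
  have eB : u (hi h) = hi h' := by rw [← hAB.2, perm_apply_inv_self]
  apply Equiv.ext
  intro x
  simp only [Perm.mul_apply]
  rcases eq_or_ne x (lo h) with rfl | hx1
  · rw [swp_eq h, Equiv.swap_apply_left, eB, eA, swp_eq h', Equiv.swap_apply_left]
  rcases eq_or_ne x (hi h) with rfl | hx2
  · rw [swp_eq h, Equiv.swap_apply_right, eA, eB, swp_eq h', Equiv.swap_apply_right]
  · rw [swp_eq h, Equiv.swap_apply_of_ne_of_ne hx1 hx2, swp_eq h',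
      Equiv.swap_apply_of_ne_of_ne]
    · intro hux
      apply hx1
      rw [← hAB.1, ← hux, perm_inv_apply_self]
    · intro hux
      apply hx2
      rw [← hAB.2, ← hux, perm_inv_apply_self]

lemma lmul {T : Perm (Fin n) → H} (hT : HeckeOK T) {j : ℕ} (h : j + 1 < n)
    (w : Perm (Fin n)) :
    T (swp j h) * T w =
      if len w < len (w * swp j h) then T (w * swp j h)
      else qq • T (w * swp j h) + (qq - 1) • T w := by
  suffices hK : ∀ K, ∀ w : Perm (Fin n), len w = K → T (swp j h) * T w =
      if len w < len (w * swp j h) then T (w * swp j h)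
      else qq • T (w * swp j h) + (qq - 1) • T w by exact hK (len w) w rfl
  intro K
  induction K using Nat.strong_induction_on with
  | _ K IH =>
  intro w hlw
  by_cases hw1 : w = 1
  · subst hw1
    rw [hT.1, mul_one, one_mul, if_pos]
    rw [len_eq_zero.mpr rfl]
    exact len_swp_pos h
  · obtain ⟨j', h', hd⟩ := exists_descent hw1
    set w' : Perm (Fin n) := swp j' h' * w with hw'def
    have hww : swp j' h' * w' = w := by
      rw [hw'def, ← mul_assoc, swp_mul_self, one_mul]
    have hlen : len w = len w' + 1 := len_swp_mul_desc h' w hd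
    have hTw : T w' * T (swp j' h') = T w := by
      have hst := hT.2 w' j' h'
      rw [if_pos (by rw [hww]; omega)] at hst
      rw [hst, hww]
    have IH' := IH (len w') (by omega) w' rfl
    have e1 : swp j' h' * (w' * swp j h) = w * swp j h := by
      rw [← mul_assoc, hww]
    by_cases c1 : len w' < len (w' * swp j h)
    · rw [if_pos c1] at IH'
      have hlen1 : len (w' * swp j h) = len w' + 1 := by
        rcases len_mul_swp_cases h w' with hc | hc
        · exact hc
        · omega
      by_cases c2 : len (w' * swp j h) < len (swp j' h' * (w' * swp j h))
      · have hlen2 : len (swp j' h' * (w' * swp j h)) = len (w' * swp j h) + 1 := by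
          rcases len_swp_mul_cases h' (w' * swp j h) with hc | hc
          · exact hc
          · omega
        have step := hT.2 (w' * swp j h) j' h'
        rw [if_pos c2, e1] at step
        rw [e1] at hlen2
        rw [if_pos (by omega)]
        calc T (swp j h) * T w = T (swp j h) * (T w' * T (swp j' h')) := by rw [hTw]
          _ = (T (swp j h) * T w') * T (swp j' h') := by rw [mul_assoc]
          _ = T (w' * swp j h) * T (swp j' h') := by rw [IH']
          _ = T (w * swp j h) := step
      · have hasc : w'⁻¹ (lo h') < w'⁻¹ (hi h') := by
          rw [← len_lt_swp_mul_iff h' w', hww]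
          omega
        have hnasc : ¬ ((w' * swp j h)⁻¹ (lo h') < (w' * swp j h)⁻¹ (hi h')) := by
          rw [← len_lt_swp_mul_iff h' (w' * swp j h)]
          exact c2
        have hforce : w' * swp j h = w := by
          rw [forcing h h' w' hasc hnasc, hww]
        have hws : w * swp j h = w' := by
          rw [← hforce, mul_assoc, swp_mul_self, mul_one]
        have step := hT.2 w j' h'
        have htw : swp j' h' * w = w' := by
          rw [hw'def]
        rw [if_neg (by rw [htw]; omega), htw] at step
        rw [if_neg (by rw [hws]; omega), hws]
        calc T (swp j h) * T w = T (swp j h) * (T w' * T (swp j' h')) := by rw [hTw]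
          _ = (T (swp j h) * T w') * T (swp j' h') := by rw [mul_assoc]
          _ = T (w' * swp j h) * T (swp j' h') := by rw [IH']
          _ = T w * T (swp j' h') := by rw [hforce]
          _ = qq • T w' + (qq - 1) • T w := step
    · rw [if_neg c1] at IH'
      have hlen1 : len w' = len (w' * swp j h) + 1 := by
        rcases len_mul_swp_cases h w' with hc | hc
        · omega
        · exact hc
      have hA := len_swp_mul_cases h' (w' * swp j h)
      rw [e1] at hA
      have hB := len_mul_swp_cases h w
      have hlen2 : len (w * swp j h) = len (w' * swp j h) + 1 := by omega
      have step := hT.2 (w' * swp j h) j' h'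
      rw [if_pos (by rw [e1]; omega), e1] at step
      rw [if_neg (by omega)]
      calc T (swp j h) * T w = T (swp j h) * (T w' * T (swp j' h')) := by rw [hTw]
        _ = (T (swp j h) * T w') * T (swp j' h') := by rw [mul_assoc]
        _ = (qq • T (w' * swp j h) + (qq - 1) • T w') * T (swp j' h') := by rw [IH']
        _ = qq • (T (w' * swp j h) * T (swp j' h')) + (qq - 1) • (T w' * T (swp j' h')) := by
            rw [add_mul, smul_mul_assoc, smul_mul_assoc]
        _ = qq • T (w * swp j h) + (qq - 1) • T w := by rw [step, hTw]

end

noncomputable section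
open Equiv Finset
open scoped Classical

variable {n : ℕ} {H : Type*} [Ring H] [Algebra R2 H]

lemma mul_swp_swp {j : ℕ} (h : j + 1 < n) (v : Perm (Fin n)) :
    v * swp j h * swp j h = v := by
  rw [mul_assoc, swp_mul_self, mul_one]

lemma swp_swp_mul {j : ℕ} (h : j + 1 < n) (v : Perm (Fin n)) :
    swp j h * (swp j h * v) = v := by
  rw [← mul_assoc, swp_mul_self, one_mul]

lemma Ts_mul_CJ {T : Perm (Fin n) → H} (hT : HeckeOK T) {J : Fin n × Fin n} {j : ℕ}
    (h : j + 1 < n) (hJ1 : memJ J (lo h)) (hJ2 : memJ J (hi h)) :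
    T (swp j h) * CJ T J = qq • CJ T J := by
  have hsJ : inSJ J (swp j h) := inSJ_swp h hJ1 hJ2
  have hmemA : ∀ v ∈ ((univ : Finset (Perm (Fin n))).filter
        (fun v => inSJ J v)).filter (fun v => len v < len (v * swp j h)),
      v * swp j h ∈ ((univ : Finset (Perm (Fin n))).filter
        (fun v => inSJ J v)).filter (fun v => ¬ len v < len (v * swp j h)) := by
    intro v hv
    rw [Finset.mem_filter, Finset.mem_filter] at hv
    rw [Finset.mem_filter, Finset.mem_filter]
    refine ⟨⟨Finset.mem_univ _, inSJ_mul hv.1.2 hsJ⟩, ?_⟩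
    rw [mul_swp_swp h v]
    have := hv.2
    omega
  have hmemB : ∀ v ∈ ((univ : Finset (Perm (Fin n))).filter
        (fun v => inSJ J v)).filter (fun v => ¬ len v < len (v * swp j h)),
      v * swp j h ∈ ((univ : Finset (Perm (Fin n))).filter
        (fun v => inSJ J v)).filter (fun v => len v < len (v * swp j h)) := by
    intro v hv
    rw [Finset.mem_filter, Finset.mem_filter] at hv
    rw [Finset.mem_filter, Finset.mem_filter]
    refine ⟨⟨Finset.mem_univ _, inSJ_mul hv.1.2 hsJ⟩, ?_⟩
    rw [mul_swp_swp h v]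
    have := len_mul_swp_cases h v
    have := hv.2
    omega
  have key1 : ∀ (F : Perm (Fin n) → H),
      ∑ v ∈ ((univ : Finset (Perm (Fin n))).filter
        (fun v => inSJ J v)).filter (fun v => len v < len (v * swp j h)), F (v * swp j h)
      = ∑ v ∈ ((univ : Finset (Perm (Fin n))).filter
        (fun v => inSJ J v)).filter (fun v => ¬ len v < len (v * swp j h)), F v := by
    intro F
    exact Finset.sum_nbij' (i := fun v => v * swp j h) (j := fun v => v * swp j h)
      hmemA hmemB (fun v _ => mul_swp_swp h v) (fun v _ => mul_swp_swp h v) (fun v _ => rfl)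
  have key2 : ∀ (F : Perm (Fin n) → H),
      ∑ v ∈ ((univ : Finset (Perm (Fin n))).filter
        (fun v => inSJ J v)).filter (fun v => ¬ len v < len (v * swp j h)), F (v * swp j h)
      = ∑ v ∈ ((univ : Finset (Perm (Fin n))).filter
        (fun v => inSJ J v)).filter (fun v => len v < len (v * swp j h)), F v := by
    intro F
    exact Finset.sum_nbij' (i := fun v => v * swp j h) (j := fun v => v * swp j h)
      hmemB hmemA (fun v _ => mul_swp_swp h v) (fun v _ => mul_swp_swp h v) (fun v _ => rfl)
  have hCJ : CJ T J = (∑ v ∈ ((univ : Finset (Perm (Fin n))).filter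
        (fun v => inSJ J v)).filter (fun v => len v < len (v * swp j h)), T v)
      + ∑ v ∈ ((univ : Finset (Perm (Fin n))).filter
        (fun v => inSJ J v)).filter (fun v => ¬ len v < len (v * swp j h)), T v := by
    rw [CJ, ← Finset.sum_filter_add_sum_filter_not
      ((univ : Finset (Perm (Fin n))).filter (fun v => inSJ J v))
      (fun v => len v < len (v * swp j h))]
  have hmul : T (swp j h) * CJ T J =
      (∑ v ∈ ((univ : Finset (Perm (Fin n))).filter
        (fun v => inSJ J v)).filter (fun v => len v < len (v * swp j h)), T (v * swp j h))
      + ∑ v ∈ ((univ : Finset (Perm (Fin n))).filter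
        (fun v => inSJ J v)).filter (fun v => ¬ len v < len (v * swp j h)),
          (qq • T (v * swp j h) + (qq - 1) • T v) := by
    rw [CJ, Finset.mul_sum, ← Finset.sum_filter_add_sum_filter_not
      ((univ : Finset (Perm (Fin n))).filter (fun v => inSJ J v))
      (fun v => len v < len (v * swp j h))]
    congr 1
    · apply Finset.sum_congr rfl
      intro v hv
      rw [Finset.mem_filter] at hv
      rw [lmul hT h v, if_pos hv.2]
    · apply Finset.sum_congr rfl
      intro v hv
      rw [Finset.mem_filter] at hv
      rw [lmul hT h v, if_neg hv.2]
  rw [hmul, hCJ, key1 T]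
  have e3 : ∑ v ∈ ((univ : Finset (Perm (Fin n))).filter
        (fun v => inSJ J v)).filter (fun v => ¬ len v < len (v * swp j h)),
          (qq • T (v * swp j h) + (qq - 1) • T v)
      = qq • (∑ v ∈ ((univ : Finset (Perm (Fin n))).filter
        (fun v => inSJ J v)).filter (fun v => ¬ len v < len (v * swp j h)), T (v * swp j h))
      + (qq - 1) • ∑ v ∈ ((univ : Finset (Perm (Fin n))).filter
        (fun v => inSJ J v)).filter (fun v => ¬ len v < len (v * swp j h)), T v := by
    rw [Finset.sum_add_distrib, Finset.smul_sum, Finset.smul_sum]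
  rw [e3, key2 T, smul_add, sub_smul, one_smul]
  abel

lemma invJ_ne_zero_of_inSJ {J : Fin n × Fin n} {v : Perm (Fin n)} (hv : inSJ J v)
    (hne : v ≠ 1) : invJ J v ≠ 0 := by
  have hlen : len v ≠ 0 := fun h0 => hne (len_eq_zero.mp h0)
  rw [len_def] at hlen
  obtain ⟨p, hp⟩ := Finset.card_ne_zero.mp hlen
  rw [mem_InvS] at hp
  obtain ⟨h1, h2⟩ := hp
  apply Finset.card_ne_zero_of_mem (a := p)
  rw [mem_InvJ]
  refine ⟨h1, h2, ?_, ?_⟩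
  · by_cases m1 : v p.1 = p.1
    · by_cases m2 : v p.2 = p.2
      · exfalso; rw [m1, m2] at h2; exact absurd h2 (not_lt.mpr h1.le)
      · have hJ2 : memJ J p.2 := hv p.2 m2
        have hJv2 : memJ J (v p.2) := memJ_image hv hJ2
        rw [m1]
        exact ⟨le_trans hJv2.1 (by rw [← m1]; exact h2.le), le_trans h1.le hJ2.2⟩
    · exact memJ_image hv (hv p.1 m1)
  · by_cases m2 : v p.2 = p.2
    · by_cases m1 : v p.1 = p.1
      · exfalso; rw [m1, m2] at h2; exact absurd h2 (not_lt.mpr h1.le)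
      · have hJ1 : memJ J p.1 := hv p.1 m1
        have hJv1 : memJ J (v p.1) := memJ_image hv hJ1
        rw [m2]
        exact ⟨le_trans hJ1.1 h1.le, le_trans (by rw [← m2]; exact h2.le) hJv1.2⟩
    · exact memJ_image hv (hv p.2 m2)

lemma tmul_min {T : Perm (Fin n) → H} (hT : HeckeOK T) {J : Fin n × Fin n}
    {u : Perm (Fin n)} (h0 : invJ J u = 0) :
    ∀ v : Perm (Fin n), inSJ J v → T u * T v = T (v * u) := by
  suffices hK : ∀ K, ∀ v : Perm (Fin n), len v = K → inSJ J v →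
      T u * T v = T (v * u) by exact fun v hv => hK (len v) v rfl hv
  intro K
  induction K using Nat.strong_induction_on with
  | _ K IH =>
  intro v hlv hv
  by_cases hv1 : v = 1
  · subst hv1
    rw [hT.1, mul_one, one_mul]
  · obtain ⟨j, h, hJ1, hJ2, hd⟩ := exists_J_descent (invJ_ne_zero_of_inSJ hv hv1)
    set v' : Perm (Fin n) := swp j h * v with hv'def
    have hvv : swp j h * v' = v := swp_swp_mul h v
    have hlen : len v = len v' + 1 := len_swp_mul_desc h v hd
    have hv'J : inSJ J v' := inSJ_mul (inSJ_swp h hJ1 hJ2) hv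
    have hTv : T v' * T (swp j h) = T v := by
      have hst := hT.2 v' j h
      rw [if_pos (by rw [hvv]; omega)] at hst
      rw [hst, hvv]
    have IH' := IH (len v') (by omega) v' rfl hv'J
    have hcond : len (v' * u) < len (swp j h * (v' * u)) := by
      rw [len_lt_swp_mul_iff h (v' * u)]
      have hv'inv : (v' * u)⁻¹ = u⁻¹ * v'⁻¹ := by rw [mul_inv_rev]
      have hlo : v'⁻¹ (lo h) = v⁻¹ (hi h) := by
        rw [hv'def, mul_inv_rev, swp_inv, Perm.mul_apply, swp_eq, Equiv.swap_apply_left]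
      have hhi : v'⁻¹ (hi h) = v⁻¹ (lo h) := by
        rw [hv'def, mul_inv_rev, swp_inv, Perm.mul_apply, swp_eq, Equiv.swap_apply_right]
      rw [hv'inv]
      simp only [Perm.mul_apply]
      rw [hlo, hhi]
      exact invJ_zero_mono h0 (memJ_image (inSJ_inv hv) hJ2)
        (memJ_image (inSJ_inv hv) hJ1) hd
    calc T u * T v = T u * (T v' * T (swp j h)) := by rw [hTv]
      _ = (T u * T v') * T (swp j h) := by rw [mul_assoc]
      _ = T (v' * u) * T (swp j h) := by rw [IH']
      _ = T (swp j h * (v' * u)) := by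
          have hst := hT.2 (v' * u) j h
          rw [if_pos hcond] at hst
          exact hst
      _ = T (v * u) := by rw [← mul_assoc, hvv]

lemma Tu_mul_CJ {T : Perm (Fin n) → H} (hT : HeckeOK T) (J : Fin n × Fin n)
    (u : Perm (Fin n)) :
    T u * CJ T J = qq ^ invJ J u •
      ∑ v ∈ (univ : Finset (Perm (Fin n))).filter (fun v => inSJ J v), T (v * u) := by
  suffices hK : ∀ K, ∀ u : Perm (Fin n), invJ J u = K → T u * CJ T J = qq ^ invJ J u •
      ∑ v ∈ (univ : Finset (Perm (Fin n))).filter (fun v => inSJ J v), T (v * u) by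
    exact hK (invJ J u) u rfl
  intro K
  induction K using Nat.strong_induction_on with
  | _ K IH =>
  intro u hKu
  by_cases h0 : invJ J u = 0
  · rw [h0, pow_zero, one_smul, CJ, Finset.mul_sum]
    apply Finset.sum_congr rfl
    intro v hv
    rw [Finset.mem_filter] at hv
    exact tmul_min hT h0 v hv.2
  · obtain ⟨j, h, hJ1, hJ2, hd⟩ := exists_J_descent h0
    set u' : Perm (Fin n) := swp j h * u with hu'def
    have huu : swp j h * u' = u := swp_swp_mul h u
    have hlen : len u = len u' + 1 := len_swp_mul_desc h u hd
    have hinv : invJ J u = invJ J u' + 1 := invJ_swp_mul_desc h hJ1 hJ2 u hd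
    have hTu : T u' * T (swp j h) = T u := by
      have hst := hT.2 u' j h
      rw [if_pos (by rw [huu]; omega)] at hst
      rw [hst, huu]
    have IH' := IH (invJ J u') (by omega) u' rfl
    have hre : ∑ v ∈ (univ : Finset (Perm (Fin n))).filter (fun v => inSJ J v), T (v * u')
        = ∑ v ∈ (univ : Finset (Perm (Fin n))).filter (fun v => inSJ J v), T (v * u) := by
      apply Finset.sum_nbij' (i := fun v => v * swp j h) (j := fun v => v * swp j h)
      · intro v hv
        rw [Finset.mem_filter] at hv ⊢
        exact ⟨Finset.mem_univ _, inSJ_mul hv.2 (inSJ_swp h hJ1 hJ2)⟩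
      · intro v hv
        rw [Finset.mem_filter] at hv ⊢
        exact ⟨Finset.mem_univ _, inSJ_mul hv.2 (inSJ_swp h hJ1 hJ2)⟩
      · intro v _; exact mul_swp_swp h v
      · intro v _; exact mul_swp_swp h v
      · intro v _
        rw [hu'def, mul_assoc]
    calc T u * CJ T J = (T u' * T (swp j h)) * CJ T J := by rw [hTu]
      _ = T u' * (T (swp j h) * CJ T J) := by rw [mul_assoc]
      _ = T u' * (qq • CJ T J) := by rw [Ts_mul_CJ hT h hJ1 hJ2]
      _ = qq • (T u' * CJ T J) := (mul_smul_comm _ _ _)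
      _ = qq • (qq ^ invJ J u' • ∑ v ∈ (univ : Finset (Perm (Fin n))).filter
            (fun v => inSJ J v), T (v * u')) := by rw [IH']
      _ = qq ^ invJ J u • ∑ v ∈ (univ : Finset (Perm (Fin n))).filter
            (fun v => inSJ J v), T (v * u) := by
          rw [hre, smul_smul, hinv, pow_succ, mul_comm]

end

noncomputable section
open Equiv Finset
open scoped Classical

variable {n m : ℕ}

lemma meetAt_snoc {Js : Fin (m + 1) → Fin n × Fin n} {vs : Fin m → Perm (Fin n)}
    {v : Perm (Fin n)} (p : Fin m) (i j : Fin n) :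
    meetAt Js (Fin.snoc vs v : Fin (m + 1) → Perm (Fin n)) p.castSucc i j ↔
      meetAt (fun q => Js q.castSucc) vs p i j := by
  have e1 : posAt (Fin.snoc vs v : Fin (m + 1) → Perm (Fin n)) (p : ℕ) = posAt vs (p : ℕ) :=
    posAt_snoc vs v (le_of_lt p.isLt)
  simp only [meetAt, centeredAt, Fin.coe_castSucc, e1]

lemma crossBefore_snoc_cast {Js : Fin (m + 1) → Fin n × Fin n} {vs : Fin m → Perm (Fin n)}
    {v : Perm (Fin n)} (p : Fin m) (i j : Fin n) :
    crossBefore Js (Fin.snoc vs v : Fin (m + 1) → Perm (Fin n)) p.castSucc i j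
      = crossBefore (fun q => Js q.castSucc) vs p i j := by
  rw [crossBefore_eq_cbN, crossBefore_eq_cbN, Fin.coe_castSucc]
  exact cbN_snoc (le_of_lt p.isLt) i j

lemma defectiveAt_snoc_cast {Js : Fin (m + 1) → Fin n × Fin n} {vs : Fin m → Perm (Fin n)}
    {v : Perm (Fin n)} (p : Fin m) (i j : Fin n) :
    defectiveAt Js (Fin.snoc vs v : Fin (m + 1) → Perm (Fin n)) p.castSucc i j ↔
      defectiveAt (fun q => Js q.castSucc) vs p i j := by
  rw [defectiveAt, defectiveAt, meetAt_snoc, crossBefore_snoc_cast]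

lemma posAt_snoc_last {vs : Fin m → Perm (Fin n)} {v : Perm (Fin n)} :
    posAt (Fin.snoc vs v : Fin (m + 1) → Perm (Fin n)) ((Fin.last m : Fin (m + 1)) : ℕ)
      = posAt vs m := by
  rw [Fin.val_last]
  exact posAt_snoc vs v le_rfl

lemma crossBefore_snoc_last {Js : Fin (m + 1) → Fin n × Fin n} {vs : Fin m → Perm (Fin n)}
    {v : Perm (Fin n)} (i j : Fin n) :
    crossBefore Js (Fin.snoc vs v : Fin (m + 1) → Perm (Fin n)) (Fin.last m) i j
      = cbN (fun q => Js q.castSucc) vs m i j := by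
  rw [crossBefore_eq_cbN, Fin.val_last]
  exact cbN_snoc le_rfl i j

lemma defective_snoc_last_iff {Js : Fin (m + 1) → Fin n × Fin n}
    (hJs : ∀ p, (Js p).1 ≤ (Js p).2) {vs : Fin m → Perm (Fin n)} {v : Perm (Fin n)}
    (hvs : IsPathFamily (fun q => Js q.castSucc) vs) {i j : Fin n} (hij : i ≠ j) :
    defectiveAt Js (Fin.snoc vs v : Fin (m + 1) → Perm (Fin n)) (Fin.last m) i j ↔
      (((Js (Fin.last m)).1 < (Js (Fin.last m)).2 ∧ memJ (Js (Fin.last m)) (posAt vs m i)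
          ∧ memJ (Js (Fin.last m)) (posAt vs m j))
        ∧ ¬ ((i < j) ↔ (posAt vs m i < posAt vs m j))) := by
  have hJs' : ∀ p : Fin m, ((fun q : Fin m => Js q.castSucc) p).1
      ≤ ((fun q : Fin m => Js q.castSucc) p).2 := fun p => hJs p.castSucc
  have hmeet : meetAt Js (Fin.snoc vs v : Fin (m + 1) → Perm (Fin n)) (Fin.last m) i j ↔
      ((Js (Fin.last m)).1 < (Js (Fin.last m)).2 ∧ memJ (Js (Fin.last m)) (posAt vs m i)
        ∧ memJ (Js (Fin.last m)) (posAt vs m j)) := by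
    simp only [meetAt, centeredAt, posAt_snoc_last]
    tauto
  rw [defectiveAt, hmeet, crossBefore_snoc_last, parity hJs' hvs hij m le_rfl]

lemma dfct_snoc {Js : Fin (m + 1) → Fin n × Fin n} (hJs : ∀ p, (Js p).1 ≤ (Js p).2)
    {vs : Fin m → Perm (Fin n)} {v : Perm (Fin n)}
    (hvs : IsPathFamily (fun q => Js q.castSucc) vs) :
    dfctNum Js (Fin.snoc vs v : Fin (m + 1) → Perm (Fin n))
      = dfctNum (fun q => Js q.castSucc) vs + invJ (Js (Fin.last m)) (typeOf vs) := by
  rw [dfctNum]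
  have hU : ((univ : Finset ((Fin n × Fin n) × Fin (m + 1))).filter fun x =>
        x.1.1 < x.1.2 ∧ defectiveAt Js (Fin.snoc vs v : Fin (m + 1) → Perm (Fin n)) x.2 x.1.1 x.1.2)
      = (((univ : Finset ((Fin n × Fin n) × Fin (m + 1))).filter fun x =>
          (x.1.1 < x.1.2 ∧ defectiveAt Js (Fin.snoc vs v : Fin (m + 1) → Perm (Fin n)) x.2 x.1.1 x.1.2)
            ∧ x.2 ≠ Fin.last m))
        ∪ (((univ : Finset ((Fin n × Fin n) × Fin (m + 1))).filter fun x =>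
          (x.1.1 < x.1.2 ∧ defectiveAt Js (Fin.snoc vs v : Fin (m + 1) → Perm (Fin n)) x.2 x.1.1 x.1.2)
            ∧ x.2 = Fin.last m)) := by
    ext x
    simp only [Finset.mem_filter, Finset.mem_union, Finset.mem_univ, true_and]
    by_cases hx : x.2 = Fin.last m
    · constructor
      · intro hh; exact Or.inr ⟨hh, hx⟩
      · rintro (⟨hh, _⟩ | ⟨hh, _⟩) <;> exact hh
    · constructor
      · intro hh; exact Or.inl ⟨hh, hx⟩
      · rintro (⟨hh, _⟩ | ⟨hh, _⟩) <;> exact hh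
  have hdisj : Disjoint
      (((univ : Finset ((Fin n × Fin n) × Fin (m + 1))).filter fun x =>
          (x.1.1 < x.1.2 ∧ defectiveAt Js (Fin.snoc vs v : Fin (m + 1) → Perm (Fin n)) x.2 x.1.1 x.1.2)
            ∧ x.2 ≠ Fin.last m))
      (((univ : Finset ((Fin n × Fin n) × Fin (m + 1))).filter fun x =>
          (x.1.1 < x.1.2 ∧ defectiveAt Js (Fin.snoc vs v : Fin (m + 1) → Perm (Fin n)) x.2 x.1.1 x.1.2)
            ∧ x.2 = Fin.last m)) := by
    rw [Finset.disjoint_left]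
    intro x h1 h2
    rw [Finset.mem_filter] at h1 h2
    exact h1.2.2 h2.2.2
  rw [hU, Finset.card_union_of_disjoint hdisj]
  congr 1
  · have himg : (((univ : Finset ((Fin n × Fin n) × Fin (m + 1))).filter fun x =>
          (x.1.1 < x.1.2 ∧ defectiveAt Js (Fin.snoc vs v : Fin (m + 1) → Perm (Fin n)) x.2 x.1.1 x.1.2)
            ∧ x.2 ≠ Fin.last m))
        = (((univ : Finset ((Fin n × Fin n) × Fin m)).filter fun x =>
            x.1.1 < x.1.2 ∧ defectiveAt (fun q => Js q.castSucc) vs x.2 x.1.1 x.1.2)).image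
          (fun x => (x.1, x.2.castSucc)) := by
      ext x
      simp only [Finset.mem_image, Finset.mem_filter, Finset.mem_univ, true_and]
      constructor
      · rintro ⟨⟨h1, h2⟩, h3⟩
        have hlt : (x.2 : ℕ) < m := by
          have h4 := x.2.isLt
          have h5 : (x.2 : ℕ) ≠ m := fun hc => h3 (Fin.ext (by rw [hc, Fin.val_last]))
          omega
        have hcs : (⟨(x.2 : ℕ), hlt⟩ : Fin m).castSucc = x.2 := by apply Fin.ext; simp
        refine ⟨(x.1, ⟨(x.2 : ℕ), hlt⟩), ⟨h1, ?_⟩, ?_⟩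
        · rw [← defectiveAt_snoc_cast (v := v) (⟨(x.2 : ℕ), hlt⟩ : Fin m) x.1.1 x.1.2, hcs]
          exact h2
        · rw [Prod.ext_iff]
          exact ⟨rfl, hcs⟩
      · rintro ⟨y, ⟨h1, h2⟩, rfl⟩
        refine ⟨⟨h1, ?_⟩, ?_⟩
        · rw [defectiveAt_snoc_cast (v := v) y.2 y.1.1 y.1.2]
          exact h2
        · simp only [ne_eq]
          intro hc
          have hv := congrArg Fin.val hc
          rw [Fin.coe_castSucc, Fin.val_last] at hv
          have := y.2.isLt
          omega
    rw [himg, Finset.card_image_of_injective, dfctNum]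
    intro a b hab
    rw [Prod.ext_iff] at hab
    exact Prod.ext hab.1 (Fin.castSucc_injective m hab.2)
  · have himg : (((univ : Finset ((Fin n × Fin n) × Fin (m + 1))).filter fun x =>
          (x.1.1 < x.1.2 ∧ defectiveAt Js (Fin.snoc vs v : Fin (m + 1) → Perm (Fin n)) x.2 x.1.1 x.1.2)
            ∧ x.2 = Fin.last m))
        = (InvJ (Js (Fin.last m)) (typeOf vs)).image (fun p => (p, Fin.last m)) := by
      ext x
      simp only [Finset.mem_image, Finset.mem_filter, Finset.mem_univ, true_and, mem_InvJ]
      constructor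
      · rintro ⟨⟨h1, h2⟩, h3⟩
        rw [h3] at h2
        have hij : x.1.1 ≠ x.1.2 := ne_of_lt h1
        rw [defective_snoc_last_iff hJs hvs hij] at h2
        obtain ⟨⟨hab, hmi, hmj⟩, hodd⟩ := h2
        have hlt : posAt vs m x.1.2 < posAt vs m x.1.1 := by
          have hne : posAt vs m x.1.1 ≠ posAt vs m x.1.2 :=
            fun hc => hij ((posAt vs m).injective hc)
          have : ¬ (posAt vs m x.1.1 < posAt vs m x.1.2) :=
            fun hc => hodd (iff_of_true h1 hc)
          exact lt_of_le_of_ne (not_lt.mp this) hne.symm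
        refine ⟨x.1, ⟨h1, hlt, hmi, hmj⟩, ?_⟩
        rw [Prod.ext_iff]
        exact ⟨rfl, h3.symm⟩
      · rintro ⟨p, ⟨h1, h2, h3, h4⟩, rfl⟩
        have hij : p.1 ≠ p.2 := ne_of_lt h1
        refine ⟨⟨h1, ?_⟩, rfl⟩
        rw [defective_snoc_last_iff hJs hvs hij]
        refine ⟨⟨lt_of_le_of_lt h4.1 (lt_of_lt_of_le h2 h3.2), h3, h4⟩, ?_⟩
        intro hiff
        exact absurd (hiff.mp h1) (not_lt.mpr h2.le)
    rw [himg, Finset.card_image_of_injective, invJ]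
    intro a b hab
    exact (Prod.ext_iff.mp hab).1

end

noncomputable section
open Equiv Finset
open scoped Classical

variable {n : ℕ} {H : Type*} [Ring H] [Algebra R2 H]

lemma cprod_eq {T : Perm (Fin n) → H} (hT : HeckeOK T) :
    ∀ {m : ℕ} (Js : Fin m → Fin n × Fin n), (∀ p, (Js p).1 ≤ (Js p).2) →
    Cprod T Js = ∑ vs ∈ (univ : Finset (Fin m → Perm (Fin n))).filter
        (fun vs => IsPathFamily Js vs),
      qq ^ dfctNum Js vs • T (typeOf vs) := by
  intro m
  induction m with
  | zero =>
    intro Js _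
    have hfil : ((univ : Finset (Fin 0 → Perm (Fin n))).filter
        (fun vs => IsPathFamily Js vs)) = univ := by
      apply Finset.filter_true_of_mem
      intro vs _ p
      exact Fin.elim0 p
    rw [Cprod, hfil]
    simp only [List.ofFn_zero, List.prod_nil]
    have hd : ∀ vs : Fin 0 → Perm (Fin n), dfctNum Js vs = 0 := by
      intro vs
      rw [dfctNum, Finset.card_eq_zero]
      apply Finset.eq_empty_of_forall_notMem
      intro x _
      exact Fin.elim0 x.2
    have ht : ∀ vs : Fin 0 → Perm (Fin n), typeOf vs = 1 := fun vs => posAt_zero _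
    rw [Finset.univ_unique, Finset.sum_singleton, hd, ht, pow_zero, one_smul, hT.1]
  | succ m IH =>
    intro Js hJs
    have hJs' : ∀ p : Fin m, ((fun q : Fin m => Js q.castSucc) p).1
        ≤ ((fun q : Fin m => Js q.castSucc) p).2 := fun p => hJs p.castSucc
    have hCsplit : Cprod T Js
        = Cprod T (fun q : Fin m => Js q.castSucc) * CJ T (Js (Fin.last m)) := by
      rw [Cprod, Cprod, List.ofFn_succ', List.concat_eq_append, List.prod_append,
        List.prod_singleton]
    rw [hCsplit, IH _ hJs', Finset.sum_mul]
    have hterm : ∀ vs' ∈ (univ : Finset (Fin m → Perm (Fin n))).filter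
        (fun vs' => IsPathFamily (fun q : Fin m => Js q.castSucc) vs'),
        (qq ^ dfctNum (fun q : Fin m => Js q.castSucc) vs' • T (typeOf vs'))
            * CJ T (Js (Fin.last m))
          = ∑ v ∈ (univ : Finset (Perm (Fin n))).filter
              (fun v => inSJ (Js (Fin.last m)) v),
              qq ^ (dfctNum (fun q : Fin m => Js q.castSucc) vs'
                + invJ (Js (Fin.last m)) (typeOf vs')) • T (v * typeOf vs') := by
      intro vs' _
      rw [smul_mul_assoc, Tu_mul_CJ hT, smul_smul, ← pow_add, Finset.smul_sum]
    rw [Finset.sum_congr rfl hterm, ← Finset.sum_product']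
    refine Finset.sum_nbij' (i := fun x => (Fin.snoc x.1 x.2 : Fin (m + 1) → Perm (Fin n)))
      (j := fun vs => (Fin.init vs, vs (Fin.last m))) ?_ ?_ ?_ ?_ ?_
    · intro x hx
      rw [Finset.mem_product, Finset.mem_filter, Finset.mem_filter] at hx
      rw [Finset.mem_filter]
      exact ⟨Finset.mem_univ _, isPathFamily_snoc.mpr ⟨hx.1.2, hx.2.2⟩⟩
    · intro vs hvs
      rw [Finset.mem_filter] at hvs
      rw [Finset.mem_product, Finset.mem_filter, Finset.mem_filter]
      have hsn : IsPathFamily Js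
          (Fin.snoc (Fin.init vs) (vs (Fin.last m)) : Fin (m + 1) → Perm (Fin n)) := by
        rw [Fin.snoc_init_self]
        exact hvs.2
      have := isPathFamily_snoc.mp hsn
      exact ⟨⟨Finset.mem_univ _, this.1⟩, Finset.mem_univ _, this.2⟩
    · intro x _
      simp
    · intro vs _
      exact Fin.snoc_init_self vs
    · intro x hx
      rw [Finset.mem_product, Finset.mem_filter] at hx
      rw [typeOf_snoc, dfct_snoc hJs hx.1.2]
  
theorem kl_product_coefficients_defects'
    {m : ℕ} (Js : Fin m → Fin n × Fin n) (hJs : ∀ p, (Js p).1 ≤ (Js p).2)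
    (T : Module.Basis (Perm (Fin n)) R2 H) (hT : HeckeOK ⇑T)
    (w : Perm (Fin n)) :
    T.repr (Cprod (⇑T) Js) w =
      ∑ vs ∈ (univ : Finset (Fin m → Perm (Fin n))).filter
          (fun vs => IsPathFamily Js vs ∧ typeOf vs = w),
        qq ^ dfctNum Js vs := by
  rw [cprod_eq hT Js hJs, map_sum]
  have h1 : ∀ vs ∈ (univ : Finset (Fin m → Perm (Fin n))).filter
      (fun vs => IsPathFamily Js vs),
      (T.repr (qq ^ dfctNum Js vs • T (typeOf vs))) w
        = (if typeOf vs = w then qq ^ dfctNum Js vs else 0) := by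
    intro vs _
    rw [map_smul, Module.Basis.repr_self, Finsupp.smul_apply, Finsupp.single_apply]
    rw [smul_eq_mul, mul_ite, mul_one, mul_zero]
  rw [Finset.sum_apply']
  rw [Finset.sum_congr rfl h1]
  have h2 : ((univ : Finset (Fin m → Perm (Fin n))).filter
      (fun vs => IsPathFamily Js vs ∧ typeOf vs = w))
      = ((univ : Finset (Fin m → Perm (Fin n))).filter
        (fun vs => IsPathFamily Js vs)).filter (fun vs => typeOf vs = w) := by
    rw [Finset.filter_filter]
  rw [h2]
  exact (Finset.sum_filter _ _).symm

end

noncomputable section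
open Equiv Finset
open scoped Classical

/-- Corollary 4.2 / `c:sigmastats`, generalizing Deodhar's
defect formula.  Writing
`C̃_{s_{J_1}}(q) ⋯ C̃_{s_{J_m}}(q) = Σ_w a_w T_w` in the natural basis of
`H_n(q)`, for every `w ∈ S_n` we have `a_w = Σ_π q^{dfct(π)}`, the sum over
all path families `π` of type `w` covering `G_{J_1} ∘ ⋯ ∘ G_{J_m}`. -/
theorem kl_product_coefficients_defects
    {n m : ℕ} (Js : Fin m → Fin n × Fin n) (hJs : ∀ p, (Js p).1 ≤ (Js p).2)
    {H : Type*} [Ring H] [Algebra R2 H]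
    (T : Module.Basis (Perm (Fin n)) R2 H) (hT : HeckeOK ⇑T)
    (w : Perm (Fin n)) :
    T.repr (Cprod (⇑T) Js) w =
      ∑ vs ∈ (univ : Finset (Fin m → Perm (Fin n))).filter
          (fun vs => IsPathFamily Js vs ∧ typeOf vs = w),
        qq ^ dfctNum Js vs :=
  kl_product_coefficients_defects' Js hJs T hT w

end
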